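/- arXiv:1302.3448 — 5 statements merged into one kernel-verified Lean document; each statement's English description precedes it below -/
import Mathlib

section
/- Let ω ∈ ℝ, λ ∈ ℝ, and μ ∈ ℝ with μ² > ω². Suppose R : (r₊, ∞) → ℂ is a nontrivial C² solution of the radial ODE which decays exponentially at infinity, extends continuously to [r₊, ∞) with R(r₊) ≠ 0, and satisfies lim_{r→r₊⁺} Δ(r)·R'(r) = i·(a·m − 2·M·r₊·ω)·R(r₊). Then a·m − 2·M·r₊·ω = 0. -/
open Real Set MeasureTheory Filter Topology ComplexConjugate

/-- The larger root `r₊ = M + √(M² − a²)`. -/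
noncomputable def rPlus (M a : ℝ) : ℝ := M + Real.sqrt (M ^ 2 - a ^ 2)

/-- The smaller root `r₋ = M − √(M² − a²)`. -/
noncomputable def rMinus (M a : ℝ) : ℝ := M - Real.sqrt (M ^ 2 - a ^ 2)

/-- `Δ(r) = (r − r₊)(r − r₋)`. -/
noncomputable def Delta (M a r : ℝ) : ℝ := (r - rPlus M a) * (r - rMinus M a)

/-- The radial potential with real parameters `ω, λ, μ`. -/
noncomputable def Vpot (M a : ℝ) (m : ℤ) (ω lam μ r : ℝ) : ℝ :=
  -(r ^ 2 + a ^ 2) ^ 2 * ω ^ 2 + 4 * M * a * m * r * ω - a ^ 2 * m ^ 2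
    + Delta M a r * (lam + a ^ 2 * ω ^ 2 + μ ^ 2 * r ^ 2)

/-- The radial ODE `Δ (Δ R')' − V R = 0` on `(r₊, ∞)`. -/
def RadialODE (M a : ℝ) (m : ℤ) (ω lam μ : ℝ) (R : ℝ → ℂ) : Prop :=
  ∀ r ∈ Ioi (rPlus M a),
    (Delta M a r : ℂ) * deriv (fun s => (Delta M a s : ℂ) * deriv R s) r
      - (Vpot M a m ω lam μ r : ℂ) * R r = 0

/-- Exponential decay at infinity of `h` together with its derivative. -/
def ExpDecay (rp : ℝ) (h : ℝ → ℂ) : Prop :=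
  ∃ C c : ℝ, 0 < C ∧ 0 < c ∧ ∀ r : ℝ, rp + 1 ≤ r →
    ‖h r‖ + ‖deriv h r‖ ≤ C * Real.exp (-c * r)

/-- Auxiliary: `(r - b) * (C * exp (-c r)) → 0` at infinity. -/
lemma lin_mul_exp_tendsto (b C c : ℝ) (hc : 0 < c) :
    Tendsto (fun r : ℝ => (r - b) * (C * Real.exp (-c * r))) atTop (𝓝 0) := by
  have h1 : Tendsto (fun r : ℝ => c * r) atTop atTop :=
    Tendsto.const_mul_atTop hc tendsto_id
  have hexp : Tendsto (fun r : ℝ => Real.exp (-(c * r))) atTop (𝓝 0) :=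
    Real.tendsto_exp_atBot.comp (tendsto_neg_atTop_atBot.comp h1)
  have hψ : Tendsto (fun x : ℝ => x * Real.exp (-x)) atTop (𝓝 0) := by
    simpa using Real.tendsto_pow_mul_exp_neg_atTop_nhds_zero 1
  have hre : Tendsto (fun r : ℝ => (c * r) * Real.exp (-(c * r))) atTop (𝓝 0) := hψ.comp h1
  have hmain : Tendsto
      (fun r : ℝ => (C / c) * ((c * r) * Real.exp (-(c * r))) - (C * b) * Real.exp (-(c * r)))
      atTop (𝓝 0) := by
    simpa using (hre.const_mul (C / c)).sub (hexp.const_mul (C * b))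
  refine hmain.congr fun r => ?_
  have hc' : c ≠ 0 := ne_of_gt hc
  field_simp

/-- a finite-energy real mode solution with `μ² > ω²` must satisfy
`a m − 2 M r₊ ω = 0`. -/
theorem stmt0 (M a : ℝ) (hM : 0 < M) (ha : |a| < M) (m : ℤ)
    (ω lam μ : ℝ) (hμ : ω ^ 2 < μ ^ 2)
    (R : ℝ → ℂ)
    (hC2 : ContDiffOn ℝ 2 R (Ioi (rPlus M a)))
    (hODE : RadialODE M a m ω lam μ R)
    (hnt : ∃ r ∈ Ioi (rPlus M a), R r ≠ 0)
    (hdecay : ExpDecay (rPlus M a) R)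
    (hcont : ContinuousOn R (Ici (rPlus M a)))
    (hR0 : R (rPlus M a) ≠ 0)
    (hflux : Tendsto (fun r => (Delta M a r : ℂ) * deriv R r)
      (𝓝[>] (rPlus M a))
      (𝓝 (Complex.I * ((a * m - 2 * M * rPlus M a * ω : ℝ) : ℂ) * R (rPlus M a)))) :
    a * m - 2 * M * rPlus M a * ω = 0 := by
  set rp := rPlus M a with hrp_def
  set rm := rMinus M a with hrm_def
  have ha2 : a ^ 2 < M ^ 2 := by
    have h1 := abs_nonneg a
    have h2 := sq_abs a
    nlinarith
  have hrm_lt : rm < rp := by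
    have : 0 < Real.sqrt (M ^ 2 - a ^ 2) := Real.sqrt_pos.2 (by linarith)
    simp only [hrp_def, hrm_def, rPlus, rMinus]
    linarith
  have hDpos : ∀ r ∈ Ioi rp, 0 < Delta M a r := by
    intro r hr
    have h1 : rp < r := hr
    have h2 : rm < r := lt_trans hrm_lt h1
    have he : Delta M a r = (r - rp) * (r - rm) := rfl
    rw [he]
    exact mul_pos (sub_pos.2 h1) (sub_pos.2 h2)
  -- the Wronskian-type quantity
  set A : ℝ → ℂ := fun s => (Delta M a s : ℂ) * deriv R s with hA_def
  set g : ℝ → ℂ := fun r => A r * (starRingEnd ℂ) (R r) with hg_def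
  set u : ℝ → ℝ := fun r => (g r).im with hu_def
  -- differentiability facts on the open set
  have hRdiff : ∀ r ∈ Ioi rp, DifferentiableAt ℝ R r := fun r hr =>
    (hC2.differentiableOn two_ne_zero).differentiableAt (isOpen_Ioi.mem_nhds hr)
  have hR'C1 : ContDiffOn ℝ 1 (deriv R) (Ioi rp) :=
    hC2.deriv_of_isOpen isOpen_Ioi (by norm_num)
  have hR'diff : ∀ r ∈ Ioi rp, DifferentiableAt ℝ (deriv R) r := fun r hr =>
    (hR'C1.differentiableOn one_ne_zero).differentiableAt (isOpen_Ioi.mem_nhds hr)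
  have hDeltaDiff : ∀ r : ℝ, DifferentiableAt ℝ (fun s => ((Delta M a s : ℝ) : ℂ)) r := by
    intro r
    have h1 : DifferentiableAt ℝ (Delta M a) r := by
      have : Delta M a = fun s => (s - rPlus M a) * (s - rMinus M a) := rfl
      rw [this]
      exact (differentiableAt_id.sub_const _).mul (differentiableAt_id.sub_const _)
    exact Complex.ofRealCLM.differentiableAt.comp r h1
  have hAdiff : ∀ r ∈ Ioi rp, DifferentiableAt ℝ A r := fun r hr =>
    (hDeltaDiff r).mul (hR'diff r hr)
  -- derivative of u is zero on the open set
  have hu_deriv : ∀ r ∈ Ioi rp, HasDerivAt u 0 r := by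
    intro r hr
    have hA : HasDerivAt A (deriv A r) r := (hAdiff r hr).hasDerivAt
    have hconj : HasDerivAt (fun s => (starRingEnd ℂ) (R s)) ((starRingEnd ℂ) (deriv R r)) r := by
      simpa only [starRingEnd_apply] using ((hRdiff r hr).hasDerivAt).star
    have hg : HasDerivAt g
        (deriv A r * (starRingEnd ℂ) (R r) + A r * (starRingEnd ℂ) (deriv R r)) r :=
      hA.mul hconj
    have hu : HasDerivAt u
        ((deriv A r * (starRingEnd ℂ) (R r) + A r * (starRingEnd ℂ) (deriv R r)).im) r :=
      Complex.imCLM.hasFDerivAt.comp_hasDerivAt r hg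
    have hd : Delta M a r ≠ 0 := ne_of_gt (hDpos r hr)
    have hODEr := hODE r hr
    have hDA : (Delta M a r : ℂ) * deriv A r = (Vpot M a m ω lam μ r : ℂ) * R r :=
      sub_eq_zero.mp hODEr
    -- multiply the derivative by the nonzero real `Delta` and take imaginary parts
    have him : (deriv A r * (starRingEnd ℂ) (R r) + A r * (starRingEnd ℂ) (deriv R r)).im = 0 := by
      have key : ((Delta M a r : ℝ) : ℂ) *
          (deriv A r * (starRingEnd ℂ) (R r) + A r * (starRingEnd ℂ) (deriv R r))
          = ((Vpot M a m ω lam μ r : ℝ) : ℂ) * ((Complex.normSq (R r) : ℝ) : ℂ)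
            + (((Delta M a r) ^ 2 : ℝ) : ℂ) * ((Complex.normSq (deriv R r) : ℝ) : ℂ) := by
        rw [← Complex.mul_conj (R r), ← Complex.mul_conj (deriv R r)]
        simp only [hA_def]
        push_cast
        linear_combination (starRingEnd ℂ) (R r) * hDA
      have h2 : Delta M a r *
          (deriv A r * (starRingEnd ℂ) (R r) + A r * (starRingEnd ℂ) (deriv R r)).im = 0 := by
        have h := congrArg Complex.im key
        rw [← Complex.ofReal_mul, ← Complex.ofReal_mul, ← Complex.ofReal_add,
          Complex.ofReal_im] at h
        simpa [Complex.mul_im] using h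
      exact (mul_eq_zero.mp h2).resolve_left hd
    simpa [hu_def, him] using hu
  -- u is constant on (rp, ∞)
  have hu_diffOn : DifferentiableOn ℝ u (Ioi rp) := fun z hz =>
    ((hu_deriv z hz).differentiableAt).differentiableWithinAt
  have hu_const : ∀ x ∈ Ioi rp, ∀ y ∈ Ioi rp, u x = u y := by
    intro x hx y hy
    refine (convex_Ioi rp).is_const_of_fderivWithin_eq_zero hu_diffOn (fun z hz => ?_) hx hy
    rw [fderivWithin_of_isOpen isOpen_Ioi hz]
    have e : (ContinuousLinearMap.smulRight (1 : ℝ →L[ℝ] ℝ) (0 : ℝ)) = 0 := by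
      ext x; simp
    have h0 : HasFDerivAt u (0 : ℝ →L[ℝ] ℝ) z := e ▸ (hu_deriv z hz).hasFDerivAt
    exact h0.fderiv
  -- decay at infinity forces the constant to be zero
  obtain ⟨C, c, hC, hc, hbound⟩ := hdecay
  have hrp1 : rp + 1 ∈ Ioi rp := by simp
  have hphi : Tendsto
      (fun r : ℝ => ((r - rp) * (C * Real.exp (-c * r))) * ((r - rm) * (C * Real.exp (-c * r))))
      atTop (𝓝 0) := by
    simpa using (lin_mul_exp_tendsto rp C c hc).mul (lin_mul_exp_tendsto rm C c hc)
  have hu_tendsto0 : Tendsto u atTop (𝓝 0) := by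
    refine squeeze_zero_norm' ?_ hphi
    filter_upwards [eventually_ge_atTop (rp + 1)] with r hr
    have hrIoi : r ∈ Ioi rp := by simp only [mem_Ioi]; linarith
    have hb := hbound r hr
    have hR_le : ‖R r‖ ≤ C * Real.exp (-c * r) := le_trans (le_add_of_nonneg_right (norm_nonneg _)) hb
    have hR'_le : ‖deriv R r‖ ≤ C * Real.exp (-c * r) :=
      le_trans (le_add_of_nonneg_left (norm_nonneg _)) hb
    have h1 : ‖u r‖ ≤ ‖g r‖ := by
      simpa [hu_def, Real.norm_eq_abs] using Complex.abs_im_le_norm (g r)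
    have h2 : ‖g r‖ = |Delta M a r| * ‖deriv R r‖ * ‖R r‖ := by
      simp [hg_def, hA_def, Complex.norm_real, mul_assoc]
    have h3 : |Delta M a r| = (r - rp) * (r - rm) := by
      rw [abs_of_pos (hDpos r hrIoi)]; rfl
    calc ‖u r‖ ≤ |Delta M a r| * ‖deriv R r‖ * ‖R r‖ := by rw [← h2]; exact h1
      _ ≤ ((r - rp) * (r - rm)) * (C * Real.exp (-c * r)) * (C * Real.exp (-c * r)) := by
          rw [h3]
          have hnn : (0:ℝ) ≤ (r - rp) * (r - rm) := by nlinarith [mem_Ioi.1 hrIoi, hrm_lt]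
          gcongr
      _ = ((r - rp) * (C * Real.exp (-c * r))) * ((r - rm) * (C * Real.exp (-c * r))) := by ring
  have hu_tendsto_const : Tendsto u atTop (𝓝 (u (rp + 1))) := by
    refine Tendsto.congr' ?_ (tendsto_const_nhds : Tendsto (fun _ : ℝ => u (rp+1)) atTop _)
    filter_upwards [eventually_ge_atTop (rp + 1)] with r hr
    exact hu_const (rp + 1) hrp1 r (by simp only [mem_Ioi]; linarith)
  have hk0 : u (rp + 1) = 0 := tendsto_nhds_unique hu_tendsto_const hu_tendsto0
  have hu_zero : ∀ r ∈ Ioi rp, u r = 0 := fun r hr => (hu_const r hr (rp + 1) hrp1).trans hk0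
  -- limit of u at rp from the right
  have hRlim : Tendsto R (𝓝[>] rp) (𝓝 (R rp)) :=
    ((hcont rp (self_mem_Ici)).mono_left (nhdsWithin_mono rp Ioi_subset_Ici_self))
  have hconjlim : Tendsto (fun r => (starRingEnd ℂ) (R r)) (𝓝[>] rp)
      (𝓝 ((starRingEnd ℂ) (R rp))) :=
    ((Complex.continuous_conj.tendsto _).comp hRlim)
  have hglim : Tendsto g (𝓝[>] rp)
      (𝓝 ((Complex.I * ((a * m - 2 * M * rp * ω : ℝ) : ℂ) * R rp) * (starRingEnd ℂ) (R rp))) :=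
    hflux.mul hconjlim
  have huim : Tendsto u (𝓝[>] rp)
      (𝓝 ((Complex.I * ((a * m - 2 * M * rp * ω : ℝ) : ℂ) * R rp * (starRingEnd ℂ) (R rp)).im)) :=
    (Complex.continuous_im.tendsto _).comp hglim
  have hu0lim : Tendsto u (𝓝[>] rp) (𝓝 0) := by
    refine Tendsto.congr' ?_ (tendsto_const_nhds : Tendsto (fun _ : ℝ => (0:ℝ)) _ _)
    filter_upwards [self_mem_nhdsWithin] with r hr
    exact (hu_zero r hr).symm
  have heq : (Complex.I * ((a * m - 2 * M * rp * ω : ℝ) : ℂ) * R rp * (starRingEnd ℂ) (R rp)).im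
      = 0 := tendsto_nhds_unique huim hu0lim
  have heq2 : (a * m - 2 * M * rp * ω) * Complex.normSq (R rp) = 0 := by
    have : Complex.I * ((a * m - 2 * M * rp * ω : ℝ) : ℂ) * R rp * (starRingEnd ℂ) (R rp)
        = Complex.I * ((a * m - 2 * M * rp * ω : ℝ) : ℂ) * ((Complex.normSq (R rp) : ℝ) : ℂ) := by
      rw [mul_assoc, Complex.mul_conj]
    rw [this] at heq
    simpa using heq
  have hns : Complex.normSq (R rp) ≠ 0 := fun h => hR0 (Complex.normSq_eq_zero.mp h)
  exact (mul_eq_zero.mp heq2).resolve_right hns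
end

section
/- Suppose ω = 0, a·m = 0, λ ≥ 0 is real, and μ > 0. If R : (r₊, ∞) → ℂ is a C² solution of the radial ODE that extends to a C¹ function on [r₊, ∞) and decays exponentially at infinity, then R is identically zero. (Equivalently: a finite-energy real mode solution with μ² > ω² and a·m − 2·M·r₊·ω = 0 must have a·m ≠ 0.) -/
open Real Set MeasureTheory Filter Topology ComplexConjugate

/-- polynomial times decaying exponential tends to zero. -/
lemma aux_pow_mul_exp_neg_mul {b : ℝ} (hb : 0 < b) (n : ℕ) :
    Tendsto (fun x : ℝ => x ^ n * Real.exp (-b * x)) atTop (𝓝 0) := by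
  have h1 : Tendsto (fun x : ℝ => b * x) atTop atTop :=
    tendsto_id.const_mul_atTop hb
  have h2 := (tendsto_pow_mul_exp_neg_atTop_nhds_zero n).comp h1
  have h3 := h2.const_mul (b ^ n)⁻¹
  rw [mul_zero] at h3
  refine h3.congr fun x => ?_
  have hbn : (b : ℝ) ^ n ≠ 0 := pow_ne_zero n hb.ne'
  simp only [Function.comp_apply, mul_pow, neg_mul]
  field_simp

/-- if `ω = 0`, `a m = 0`, `λ ≥ 0` and `μ > 0`, then any C² solution of the
radial ODE extending C¹ to `[r₊, ∞)` and decaying exponentially at infinity vanishes. -/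
theorem stmt1 (M a : ℝ) (hM : 0 < M) (ha : |a| < M) (m : ℤ)
    (lam μ : ℝ) (ham : a * m = 0) (hlam : 0 ≤ lam) (hμ : 0 < μ)
    (R : ℝ → ℂ)
    (hC2 : ContDiffOn ℝ 2 R (Ioi (rPlus M a)))
    (hODE : RadialODE M a m 0 lam μ R)
    (hC1 : ContDiffOn ℝ 1 R (Ici (rPlus M a)))
    (hdecay : ExpDecay (rPlus M a) R) :
    ∀ r ∈ Ioi (rPlus M a), R r = 0 := by
  obtain ⟨C, c, hC, hc, hdec⟩ := hdecay
  set rp := rPlus M a with hrpdef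
  set rm := rMinus M a with hrmdef
  have hsq : 0 < Real.sqrt (M ^ 2 - a ^ 2) := by
    apply Real.sqrt_pos.2
    have h1 : a ^ 2 < M ^ 2 := by nlinarith [abs_nonneg a, sq_abs a]
    linarith
  have hrmrp : rm < rp := by
    rw [hrpdef, hrmdef]; unfold rPlus rMinus; linarith
  have hrp0 : 0 < rp := by
    rw [hrpdef]; unfold rPlus; linarith
  have hΔpos : ∀ r ∈ Ioi rp, 0 < Delta M a r := by
    intro r hr
    have hr' : rp < r := hr
    have : rm < r := lt_trans hrmrp hr'
    unfold Delta
    rw [← hrpdef, ← hrmdef]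
    exact mul_pos (by linarith) (by linarith)
  set q : ℝ → ℝ := fun r => lam + μ ^ 2 * r ^ 2 with hqdef
  have hqpos : ∀ r ∈ Ioi rp, 0 < q r := by
    intro r hr
    have h1 : 0 < r := lt_trans hrp0 hr
    have h2 : 0 < μ ^ 2 * r ^ 2 := by positivity
    simp only [hqdef]; linarith
  have hV : ∀ r, Vpot M a m 0 lam μ r = Delta M a r * q r := by
    intro r
    have h2 : a ^ 2 * (m : ℝ) ^ 2 = (a * (m : ℝ)) ^ 2 := by ring
    unfold Vpot
    rw [h2, ham]
    simp only [hqdef]; ring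
  set S := Ioi rp with hSdef
  have hSopen : IsOpen S := isOpen_Ioi
  -- differentiability facts
  have hRd : ∀ r ∈ S, DifferentiableAt ℝ R r := fun r hr =>
    ((hC2.differentiableOn (by norm_num)) r hr).differentiableAt (hSopen.mem_nhds hr)
  have hR'cd : ContDiffOn ℝ 1 (deriv R) S := hC2.deriv_of_isOpen hSopen (by norm_num)
  have hR'd : ∀ r ∈ S, DifferentiableAt ℝ (deriv R) r := fun r hr =>
    ((hR'cd.differentiableOn (by norm_num)) r hr).differentiableAt (hSopen.mem_nhds hr)
  have hΔreal : Differentiable ℝ (Delta M a) := by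
    unfold Delta; fun_prop
  have hΔC : Differentiable ℝ (fun s : ℝ => (Delta M a s : ℂ)) := by
    have := Complex.ofRealCLM.differentiable.comp hΔreal
    exact this
  set W : ℝ → ℂ := fun s => (Delta M a s : ℂ) * deriv R s with hWdef
  have hWd : ∀ r ∈ S, DifferentiableAt ℝ W r := fun r hr =>
    (hΔC r).mul (hR'd r hr)
  -- the ODE in first-order form
  have hW' : ∀ r ∈ S, deriv W r = (q r : ℂ) * R r := by
    intro r hr
    have h0 := hODE r hr
    rw [hV] at h0
    have hΔne : (Delta M a r : ℂ) ≠ 0 := by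
      exact_mod_cast (hΔpos r hr).ne'
    have h1 : (Delta M a r : ℂ) * (deriv W r - (q r : ℂ) * R r) = 0 := by
      push_cast at h0 ⊢
      rw [hWdef]
      linear_combination h0
    rcases mul_eq_zero.1 h1 with h | h
    · exact absurd h hΔne
    · exact sub_eq_zero.1 h
  -- energy function
  set g : ℝ → ℂ := fun r => star (R r) * W r with hgdef
  set G : ℝ → ℝ := fun r => (g r).re with hGdef
  have hGderiv : ∀ r ∈ S, HasDerivAt G
      (Delta M a r * Complex.normSq (deriv R r) + q r * Complex.normSq (R r)) r := by
    intro r hr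
    have hR : HasDerivAt R (deriv R r) r := (hRd r hr).hasDerivAt
    have hWhd : HasDerivAt W ((q r : ℂ) * R r) r := by
      have h1 := (hWd r hr).hasDerivAt
      rwa [hW' r hr] at h1
    have hconj : HasDerivAt (fun s => star (R s)) (star (deriv R r)) r := hR.star
    have hgd : HasDerivAt g
        (star (deriv R r) * W r + star (R r) * ((q r : ℂ) * R r)) r := hconj.mul hWhd
    have hre := Complex.reCLM.hasFDerivAt.comp_hasDerivAt r hgd
    convert hre using 1
    · rfl
    · rfl
    · rfl
    simp only [hWdef, Complex.reCLM_coe, Complex.star_def]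
    simp [Complex.mul_re, Complex.mul_im, Complex.normSq_apply]
    ring
  -- monotonicity
  have hGmono : MonotoneOn G S := by
    apply monotoneOn_of_deriv_nonneg (convex_Ioi rp)
    · exact fun r hr => (hGderiv r hr).continuousAt.continuousWithinAt
    · intro r hr
      rw [interior_Ioi] at hr
      exact ((hGderiv r hr).differentiableAt).differentiableWithinAt
    · intro r hr
      rw [interior_Ioi] at hr
      rw [(hGderiv r hr).deriv]
      have h1 := (hΔpos r hr).le
      have h2 := (hqpos r hr).le
      have h3 := Complex.normSq_nonneg (deriv R r)
      have h4 := Complex.normSq_nonneg (R r)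
      nlinarith
  -- limit at r₊ from the right
  have hGlim0 : Tendsto G (𝓝[>] rp) (𝓝 0) := by
    have hΔc : Tendsto (Delta M a) (𝓝[>] rp) (𝓝 0) := by
      have h1 : ContinuousAt (Delta M a) rp := hΔreal.continuous.continuousAt
      have h2 : Tendsto (Delta M a) (𝓝[>] rp) (𝓝 (Delta M a rp)) :=
        h1.tendsto.mono_left nhdsWithin_le_nhds
      have h3 : Delta M a rp = 0 := by
        unfold Delta; rw [← hrpdef]; ring
      rwa [h3] at h2
    have hRc : ContinuousOn R (Ici rp) := hC1.continuousOn
    have hR'c : ContinuousOn (derivWithin R (Ici rp)) (Ici rp) :=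
      hC1.continuousOn_derivWithin (uniqueDiffOn_Ici rp) (by norm_num)
    set f : ℝ → ℝ := fun r => (star (R r) * derivWithin R (Ici rp) r).re with hfdef
    have hfc : Tendsto f (𝓝[>] rp) (𝓝 (f rp)) := by
      have h1 := (hRc rp self_mem_Ici).star.mul (hR'c rp self_mem_Ici)
      have h2 : ContinuousWithinAt f (Ici rp) rp := Complex.continuous_re.continuousAt.comp_continuousWithinAt h1
      exact h2.tendsto.mono_left (nhdsWithin_mono rp Ioi_subset_Ici_self)
    have hmul := hΔc.mul hfc
    rw [zero_mul] at hmul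
    refine hmul.congr' ?_
    filter_upwards [self_mem_nhdsWithin] with r hr
    have hderiv_eq : derivWithin R (Ici rp) r = deriv R r :=
      derivWithin_of_mem_nhds (Ici_mem_nhds hr)
    simp only [hfdef, hGdef, hgdef, hWdef, hderiv_eq]
    rw [show star (R r) * ((Delta M a r : ℂ) * deriv R r)
        = (Delta M a r : ℂ) * (star (R r) * deriv R r) by ring]
    simp [Complex.mul_re, Complex.mul_im]
  -- limit at infinity
  have hGlimtop : Tendsto G atTop (𝓝 0) := by
    set B : ℝ → ℝ := fun r => Delta M a r * (C * Real.exp (-c * r)) ^ 2 with hBdef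
    have hBlim : Tendsto B atTop (𝓝 0) := by
      set E : ℝ → ℝ := fun r => Real.exp (-(2 * c) * r) with hEdef
      have e2 := (aux_pow_mul_exp_neg_mul (by linarith : (0:ℝ) < 2 * c) 2).const_mul (C ^ 2)
      have e1 := (aux_pow_mul_exp_neg_mul (by linarith : (0:ℝ) < 2 * c) 1).const_mul (C ^ 2 * (rp + rm))
      have e0 := (aux_pow_mul_exp_neg_mul (by linarith : (0:ℝ) < 2 * c) 0).const_mul (C ^ 2 * (rp * rm))
      rw [mul_zero] at e2 e1 e0
      have hsum := (e2.sub e1).add e0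
      rw [show (0:ℝ) - 0 + 0 = 0 by ring] at hsum
      refine hsum.congr fun r => ?_
      simp only [hBdef, hEdef, pow_zero, pow_one]
      have hexp : Real.exp (-c * r) ^ 2 = Real.exp (-(2 * c) * r) := by
        rw [pow_two, ← Real.exp_add]
        ring_nf
      rw [mul_pow, hexp]
      unfold Delta
      rw [← hrpdef, ← hrmdef]
      ring
    apply squeeze_zero_norm' _ hBlim
    filter_upwards [eventually_ge_atTop (rp + 1)] with r hr
    have hrS : r ∈ S := by
      rw [hSdef]; exact lt_of_lt_of_le (by linarith) hr
    have hbd := hdec r hr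
    have hR0 : 0 ≤ ‖R r‖ := norm_nonneg _
    have hR'0 : 0 ≤ ‖deriv R r‖ := norm_nonneg _
    have h1 : ‖R r‖ ≤ C * Real.exp (-c * r) := by linarith
    have h2 : ‖deriv R r‖ ≤ C * Real.exp (-c * r) := by linarith
    have hΔ := hΔpos r hrS
    have habs : ‖G r‖ ≤ Delta M a r * (‖R r‖ * ‖deriv R r‖) := by
      have hre : |(g r).re| ≤ ‖g r‖ := Complex.abs_re_le_norm (g r)
      have hnorm : ‖g r‖ = ‖R r‖ * (Delta M a r * ‖deriv R r‖) := by
        simp only [hgdef, hWdef]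
        rw [norm_mul, norm_mul, norm_star, Complex.norm_real, Real.norm_eq_abs,
          abs_of_pos hΔ]
      simp only [hGdef, Real.norm_eq_abs]
      rw [hnorm] at hre
      linarith [hre]
    have hprod : ‖R r‖ * ‖deriv R r‖ ≤ (C * Real.exp (-c * r)) ^ 2 := by
      have := mul_le_mul h1 h2 hR'0 (by positivity)
      nlinarith
    calc ‖G r‖ ≤ Delta M a r * (‖R r‖ * ‖deriv R r‖) := habs
      _ ≤ B r := by
        simp only [hBdef]
        exact mul_le_mul_of_nonneg_left hprod hΔ.le
  -- G vanishes identically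
  have hG0 : ∀ r ∈ S, G r = 0 := by
    intro r hr
    have h1 : 0 ≤ G r := by
      refine le_of_tendsto hGlim0 ?_
      filter_upwards [Ioo_mem_nhdsGT_of_mem (⟨le_refl rp, hr⟩ : rp ∈ Ico rp r)] with s hs
      exact hGmono hs.1 hr hs.2.le
    have h2 : G r ≤ 0 := by
      refine ge_of_tendsto hGlimtop ?_
      filter_upwards [eventually_ge_atTop r] with s hs
      exact hGmono hr (lt_of_lt_of_le hr hs) hs
    linarith
  -- conclusion
  intro r hr
  have hd0 : deriv G r = 0 := by
    have hEq : G =ᶠ[𝓝 r] fun _ => (0 : ℝ) := by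
      filter_upwards [hSopen.mem_nhds hr] with s hs using hG0 s hs
    rw [hEq.deriv_eq, deriv_const]
  have hsum : Delta M a r * Complex.normSq (deriv R r) + q r * Complex.normSq (R r) = 0 := by
    rw [← (hGderiv r hr).deriv, hd0]
  have hΔ := hΔpos r hr
  have hq := hqpos r hr
  have h3 := Complex.normSq_nonneg (deriv R r)
  have h4 := Complex.normSq_nonneg (R r)
  have h5 : Complex.normSq (R r) = 0 := by nlinarith
  exact Complex.normSq_eq_zero.1 h5
end

section
/- Let ω, λ, μ ∈ ℝ and suppose V(r) ≥ 0 for all r ∈ (r₊, ∞). If R : (r₊, ∞) → ℂ is a C² solution of the radial ODE that extends to a C¹ function on [r₊, ∞) and decays exponentially at infinity, then R is identically zero. -/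
open Real Set MeasureTheory Filter Topology ComplexConjugate

/-- if the potential `V` is everywhere nonnegative on `(r₊, ∞)`, then any C²
solution of the radial ODE extending C¹ to `[r₊, ∞)` and decaying exponentially vanishes. -/
theorem stmt2 (M a : ℝ) (hM : 0 < M) (ha : |a| < M) (m : ℤ)
    (ω lam μ : ℝ)
    (hV : ∀ r ∈ Ioi (rPlus M a), 0 ≤ Vpot M a m ω lam μ r)
    (R : ℝ → ℂ)
    (hC2 : ContDiffOn ℝ 2 R (Ioi (rPlus M a)))
    (hODE : RadialODE M a m ω lam μ R)
    (hC1 : ContDiffOn ℝ 1 R (Ici (rPlus M a)))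
    (hdecay : ExpDecay (rPlus M a) R) :
    ∀ r ∈ Ioi (rPlus M a), R r = 0 := by
  obtain ⟨C, c, hC, hc, hdec⟩ := hdecay
  set rp := rPlus M a with hrp_def
  set rm := rMinus M a with hrm_def
  have hsqrt_nonneg : (0:ℝ) ≤ Real.sqrt (M ^ 2 - a ^ 2) := Real.sqrt_nonneg _
  have hsqrt_le : Real.sqrt (M ^ 2 - a ^ 2) ≤ M := by
    have h := Real.sqrt_le_sqrt (show M ^ 2 - a ^ 2 ≤ M ^ 2 by nlinarith [sq_nonneg a])
    rwa [Real.sqrt_sq hM.le] at h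
  have hrm_le : rm ≤ rp := by
    rw [hrp_def, hrm_def]; unfold rPlus rMinus; linarith
  have hrm0 : 0 ≤ rm := by rw [hrm_def]; unfold rMinus; linarith
  have hrp0 : 0 ≤ rp := by rw [hrp_def]; unfold rPlus; linarith
  have hΔpos : ∀ r ∈ Ioi rp, 0 < Delta M a r := by
    intro r hr
    exact mul_pos (sub_pos.2 hr) (sub_pos.2 (lt_of_le_of_lt hrm_le hr))
  -- differentiability of R and deriv R on the open set
  have hRdiff : ∀ r ∈ Ioi rp, DifferentiableAt ℝ R r := by
    intro r hr
    exact (hC2.differentiableOn (by norm_num)).differentiableAt (isOpen_Ioi.mem_nhds hr)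
  have hC2' : ContDiffOn ℝ 1 (deriv R) (Ioi rp) :=
    hC2.deriv_of_isOpen isOpen_Ioi (by norm_num)
  have hR'diff : ∀ r ∈ Ioi rp, DifferentiableAt ℝ (deriv R) r := by
    intro r hr
    exact (hC2'.differentiableOn (by norm_num)).differentiableAt (isOpen_Ioi.mem_nhds hr)
  -- Delta as a complex-valued function
  have hΔCdiff : ∀ r : ℝ, DifferentiableAt ℝ (fun s => (Delta M a s : ℂ)) r := by
    intro r
    apply Complex.ofRealCLM.differentiable.comp ?_ |>.differentiableAt
    exact ((differentiable_id.sub_const _).mul (differentiable_id.sub_const _))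
  set F : ℝ → ℂ := fun s => (Delta M a s : ℂ) * deriv R s with hF_def
  have hFdiff : ∀ r ∈ Ioi rp, DifferentiableAt ℝ F r := by
    intro r hr
    exact (hΔCdiff r).mul (hR'diff r hr)
  -- value of deriv F from the ODE
  have hderivF : ∀ r ∈ Ioi rp,
      deriv F r = ((Vpot M a m ω lam μ r : ℂ) * R r) / (Delta M a r : ℂ) := by
    intro r hr
    have hODEr := hODE r hr
    have hΔne : (Delta M a r : ℂ) ≠ 0 := by
      exact_mod_cast (hΔpos r hr).ne'
    rw [eq_div_iff hΔne]
    rw [sub_eq_zero] at hODEr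
    exact (mul_comm _ _).trans hODEr
  -- the energy function g
  set g : ℝ → ℝ := fun s => (F s * conj (R s)).re with hg_def
  set D : ℝ → ℝ := fun r => Vpot M a m ω lam μ r / Delta M a r * Complex.normSq (R r)
      + Delta M a r * Complex.normSq (deriv R r) with hD_def
  have hgd : ∀ r ∈ Ioi rp, HasDerivAt g (D r) r := by
    intro r hr
    have hF : HasDerivAt F (((Vpot M a m ω lam μ r : ℂ) * R r) / (Delta M a r : ℂ)) r := by
      have := (hFdiff r hr).hasDerivAt
      rwa [hderivF r hr] at this
    have hconjR : HasDerivAt (fun s => conj (R s)) (conj (deriv R r)) r := by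
      simpa using ((hRdiff r hr).hasDerivAt).star
    have h3 := hF.mul hconjR
    have h4 := Complex.reCLM.hasFDerivAt.comp_hasDerivAt r h3
    have hre : (((Vpot M a m ω lam μ r : ℂ) * R r / (Delta M a r : ℂ)) * conj (R r)
        + F r * conj (deriv R r)).re = D r := by
      have e1 : ((Vpot M a m ω lam μ r : ℂ) * R r / (Delta M a r : ℂ)) * conj (R r)
          = ((Vpot M a m ω lam μ r / Delta M a r * Complex.normSq (R r) : ℝ) : ℂ) := by
        rw [div_mul_eq_mul_div, mul_assoc, Complex.mul_conj]
        push_cast; ring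
      have e2 : F r * conj (deriv R r)
          = ((Delta M a r * Complex.normSq (deriv R r) : ℝ) : ℂ) := by
        rw [hF_def, mul_assoc, Complex.mul_conj]
        push_cast; ring
      rw [e1, e2, ← Complex.ofReal_add, Complex.ofReal_re, hD_def]
    rw [← hre]
    exact h4
  have hDnonneg : ∀ r ∈ Ioi rp, 0 ≤ D r := by
    intro r hr
    have h1 : 0 ≤ Vpot M a m ω lam μ r / Delta M a r :=
      div_nonneg (hV r hr) (hΔpos r hr).le
    have := Complex.normSq_nonneg (R r)
    have := Complex.normSq_nonneg (deriv R r)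
    have := (hΔpos r hr).le
    rw [hD_def]
    positivity
  -- monotonicity of g
  have hmono : MonotoneOn g (Ioi rp) := by
    apply monotoneOn_of_deriv_nonneg (convex_Ioi rp)
    · intro r hr
      exact ((hgd r hr).continuousAt).continuousWithinAt
    · rw [interior_Ioi]
      intro r hr
      exact ((hgd r hr).differentiableAt).differentiableWithinAt
    · rw [interior_Ioi]
      intro r hr
      rw [(hgd r hr).deriv]
      exact hDnonneg r hr
  -- limit of g at rp from the right
  have hg_lim0 : Tendsto g (𝓝[>] rp) (𝓝 0) := by
    have hΔ0 : Tendsto (fun s => Delta M a s) (𝓝[>] rp) (𝓝 0) := by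
      have hcont : ContinuousAt (Delta M a) rp := by
        apply Continuous.continuousAt
        exact ((continuous_id.sub continuous_const).mul (continuous_id.sub continuous_const))
      have h0 : Delta M a rp = 0 := by unfold Delta; rw [← hrp_def]; ring
      have := hcont.continuousWithinAt (s := Ioi rp)
      rwa [ContinuousWithinAt, h0] at this
    have hf'cont : ContinuousOn (derivWithin R (Ici rp)) (Ici rp) :=
      hC1.continuousOn_derivWithin (uniqueDiffOn_Ici rp) le_rfl
    have hR'tend : Tendsto (deriv R) (𝓝[>] rp) (𝓝 (derivWithin R (Ici rp) rp)) := by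
      have h1 : Tendsto (derivWithin R (Ici rp)) (𝓝[>] rp) (𝓝 (derivWithin R (Ici rp) rp)) :=
        (hf'cont rp self_mem_Ici).mono_left (nhdsWithin_mono rp Ioi_subset_Ici_self)
      apply h1.congr'
      filter_upwards [self_mem_nhdsWithin] with s hs
      exact derivWithin_of_mem_nhds (Ici_mem_nhds hs)
    have hRtend : Tendsto R (𝓝[>] rp) (𝓝 (R rp)) :=
      ((hC1.continuousOn rp self_mem_Ici).mono_left (nhdsWithin_mono rp Ioi_subset_Ici_self))
    have hconjtend : Tendsto (fun s => conj (R s)) (𝓝[>] rp) (𝓝 (conj (R rp))) :=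
      (Complex.continuous_conj.tendsto _).comp hRtend
    have hprod : Tendsto (fun s => (deriv R s * conj (R s)).re) (𝓝[>] rp)
        (𝓝 ((derivWithin R (Ici rp) rp * conj (R rp)).re)) :=
      (Complex.continuous_re.tendsto _).comp (hR'tend.mul hconjtend)
    have hmain := hΔ0.mul hprod
    rw [zero_mul] at hmain
    apply hmain.congr
    intro s
    rw [hg_def, hF_def]
    simp only [mul_assoc, Complex.re_ofReal_mul]
  -- limit of g at infinity
  have hcs : Tendsto (fun s : ℝ => c * s) atTop atTop :=
    Tendsto.const_mul_atTop hc tendsto_id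
  have hexp : Tendsto (fun s : ℝ => Real.exp (-c * s)) atTop (𝓝 0) := by
    have h2 : Tendsto (fun s : ℝ => -(c * s)) atTop atBot := tendsto_neg_atTop_atBot.comp hcs
    have := Real.tendsto_exp_atBot.comp h2
    apply this.congr
    intro s; simp [neg_mul]
  have hpoly : Tendsto (fun s : ℝ => s ^ 2 * Real.exp (-c * s)) atTop (𝓝 0) := by
    have h3 := (Real.tendsto_pow_mul_exp_neg_atTop_nhds_zero 2).comp hcs
    have h4 := h3.const_mul ((c ^ 2)⁻¹)
    rw [mul_zero] at h4
    apply h4.congr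
    intro s
    simp only [Function.comp_apply]
    rw [neg_mul]
    field_simp
  have hg_limtop : Tendsto g atTop (𝓝 0) := by
    apply squeeze_zero_norm' (a := fun s => (C * C) * ((s ^ 2 * Real.exp (-c * s)) * Real.exp (-c * s)))
    · filter_upwards [eventually_ge_atTop (rp + 1)] with s hs
      have hsIoi : s ∈ Ioi rp := by simp only [mem_Ioi]; linarith
      have hΔs : 0 < Delta M a s := hΔpos s hsIoi
      have hΔle : Delta M a s ≤ s ^ 2 := by
        unfold Delta
        rw [← hrp_def, ← hrm_def]
        nlinarith [hrp0, hrm0, sub_pos.2 (mem_Ioi.1 hsIoi)]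
      have hds := hdec s hs
      have hR1 : ‖R s‖ ≤ C * Real.exp (-c * s) := by
        have := norm_nonneg (deriv R s); linarith
      have hR2 : ‖deriv R s‖ ≤ C * Real.exp (-c * s) := by
        have := norm_nonneg (R s); linarith
      have hb1 : ‖g s‖ ≤ Delta M a s * ‖deriv R s‖ * ‖R s‖ := by
        rw [hg_def]
        calc |(F s * conj (R s)).re| ≤ ‖F s * conj (R s)‖ := Complex.abs_re_le_norm _
          _ = ‖F s‖ * ‖R s‖ := by rw [norm_mul]; simp
          _ = Delta M a s * ‖deriv R s‖ * ‖R s‖ := by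
              rw [hF_def]
              simp only [norm_mul, Complex.norm_real]
              rw [Real.norm_eq_abs, abs_of_pos hΔs]
      calc ‖g s‖ ≤ Delta M a s * ‖deriv R s‖ * ‖R s‖ := hb1
        _ ≤ s ^ 2 * (C * Real.exp (-c * s)) * (C * Real.exp (-c * s)) := by
            apply mul_le_mul (mul_le_mul hΔle hR2 (norm_nonneg _) (by positivity)) hR1
              (norm_nonneg _) (by positivity)
        _ = (C * C) * ((s ^ 2 * Real.exp (-c * s)) * Real.exp (-c * s)) := by ring
    · have := ((hpoly.mul hexp).const_mul (C * C))
      simpa using this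
  -- g vanishes on the interval
  have hg0 : ∀ r ∈ Ioi rp, g r = 0 := by
    intro r hr
    have hle : g r ≤ 0 := by
      apply ge_of_tendsto hg_limtop
      filter_upwards [eventually_ge_atTop (max r (rp + 1))] with s hs
      have h1 : r ≤ s := le_trans (le_max_left _ _) hs
      have h2 : s ∈ Ioi rp := by
        have := le_trans (le_max_right _ _) hs
        simp only [mem_Ioi]; linarith
      exact hmono hr h2 h1
    have hge : 0 ≤ g r := by
      apply le_of_tendsto hg_lim0
      filter_upwards [Ioo_mem_nhdsGT_of_mem ⟨le_refl rp, mem_Ioi.1 hr⟩] with s hs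
      exact hmono (mem_Ioi.2 hs.1) hr hs.2.le
    linarith
  -- hence D = 0, so deriv R = 0 on the interval
  have hR'0 : ∀ r ∈ Ioi rp, deriv R r = 0 := by
    intro r hr
    have hD0 : D r = 0 := by
      have h1 : deriv g r = D r := (hgd r hr).deriv
      have h2 : g =ᶠ[𝓝 r] fun _ => (0:ℝ) := by
        filter_upwards [isOpen_Ioi.mem_nhds hr] with s hs
        exact hg0 s hs
      have h3 : deriv g r = 0 := by
        rw [h2.deriv_eq]; simp
      rw [← h1, h3]
    have h1 : 0 ≤ Vpot M a m ω lam μ r / Delta M a r * Complex.normSq (R r) :=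
      mul_nonneg (div_nonneg (hV r hr) (hΔpos r hr).le) (Complex.normSq_nonneg _)
    have h2 : 0 ≤ Delta M a r * Complex.normSq (deriv R r) :=
      mul_nonneg (hΔpos r hr).le (Complex.normSq_nonneg _)
    have h3 : Delta M a r * Complex.normSq (deriv R r) = 0 := by
      rw [hD_def] at hD0; dsimp at hD0; linarith
    have h4 : Complex.normSq (deriv R r) = 0 := by
      rcases mul_eq_zero.1 h3 with h | h
      · exact absurd h (hΔpos r hr).ne'
      · exact h
    exact Complex.normSq_eq_zero.1 h4
  -- R is constant on the interval
  have hconst : ∀ x ∈ Ioi rp, ∀ y ∈ Ioi rp, R x = R y := by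
    intro x hx y hy
    apply (convex_Ioi rp).is_const_of_fderivWithin_eq_zero
      (fun z hz => (hRdiff z hz).differentiableWithinAt) ?_ hx hy
    intro z hz
    rw [fderivWithin_of_isOpen isOpen_Ioi hz]
    have h0 : HasDerivAt R 0 z := hR'0 z hz ▸ (hRdiff z hz).hasDerivAt
    have := h0.hasFDerivAt.fderiv
    rw [this]
    ext
    simp
  -- conclude
  intro r₀ hr₀
  have hnorm : ∀ s : ℝ, max (rp + 1) r₀ ≤ s → ‖R r₀‖ ≤ C * Real.exp (-c * s) := by
    intro s hs
    have h1 : rp + 1 ≤ s := le_trans (le_max_left _ _) hs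
    have hsIoi : s ∈ Ioi rp := by simp only [mem_Ioi]; linarith
    rw [hconst r₀ hr₀ s hsIoi]
    have := hdec s h1
    have := norm_nonneg (deriv R s)
    linarith
  have hlim : Tendsto (fun s : ℝ => C * Real.exp (-c * s)) atTop (𝓝 0) := by
    have := hexp.const_mul C
    simpa using this
  have : ‖R r₀‖ ≤ 0 := by
    apply ge_of_tendsto hlim
    filter_upwards [eventually_ge_atTop (max (rp + 1) r₀)] with s hs
    exact hnorm s hs
  exact norm_le_zero_iff.1 this
end

section
/- Suppose a·m ≠ 0 and set ω := a·m/(2·M·r₊). Then there exists a function C : ℝ → [0, ∞) (depending only on M, a, m) with lim_{λ→+∞} C(λ) = 0 such that: for every real λ and every real μ with μ² > ω², if there exists a nonzero C² solution R of the radial ODE (with parameters ω, m, λ, μ) extending to a C¹ function on [r₊, ∞) and decaying exponentially at infinity, then μ² < ω² + C(λ). -/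
open Real Set MeasureTheory Filter Topology ComplexConjugate

lemma sqrt_sub_pos {M a : ℝ} (hM : 0 < M) (ha : |a| < M) :
    0 < Real.sqrt (M ^ 2 - a ^ 2) := by
  have h1 := abs_nonneg a
  have h2 := sq_abs a
  apply Real.sqrt_pos.2
  nlinarith [abs_lt.1 ha]

lemma rMinus_nonneg {M a : ℝ} (hM : 0 < M) (ha : |a| < M) : 0 ≤ rMinus M a := by
  have h : Real.sqrt (M ^ 2 - a ^ 2) ≤ Real.sqrt (M ^ 2) :=
    Real.sqrt_le_sqrt (by nlinarith [sq_nonneg a])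
  rw [Real.sqrt_sq hM.le] at h
  simp only [rMinus]; linarith

lemma rMinus_lt_rPlus {M a : ℝ} (hM : 0 < M) (ha : |a| < M) : rMinus M a < rPlus M a := by
  have := sqrt_sub_pos hM ha
  simp only [rMinus, rPlus]; linarith

lemma rPlus_pos {M a : ℝ} (hM : 0 < M) (ha : |a| < M) : 0 < rPlus M a := by
  have := Real.sqrt_nonneg (M ^ 2 - a ^ 2)
  simp only [rPlus]; linarith

lemma rsum {M a : ℝ} : rPlus M a + rMinus M a = 2 * M := by
  simp only [rPlus, rMinus]; ring

lemma rprod {M a : ℝ} (hM : 0 < M) (ha : |a| < M) : rPlus M a * rMinus M a = a ^ 2 := by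
  have h : Real.sqrt (M ^ 2 - a ^ 2) ^ 2 = M ^ 2 - a ^ 2 := by
    apply Real.sq_sqrt
    nlinarith [sq_abs a, abs_nonneg a, abs_lt.1 ha]
  simp only [rPlus, rMinus]; nlinarith [h]

lemma delta_eq {M a : ℝ} (hM : 0 < M) (ha : |a| < M) (r : ℝ) :
    Delta M a r = r ^ 2 - 2 * M * r + a ^ 2 := by
  have h1 : rPlus M a + rMinus M a = 2 * M := rsum
  have h2 := rprod hM ha
  simp only [Delta]
  linear_combination (-r) * h1 + h2

/-- Key factorization of the potential at the threshold frequency. -/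
lemma vpot_factor {M a : ℝ} (hM : 0 < M) (ha : |a| < M) (m : ℤ) {w : ℝ}
    (hw : 2 * M * rPlus M a * w = a * m) (lam μ r : ℝ) :
    Vpot M a m w lam μ r = (r - rPlus M a) *
      ((lam + a ^ 2 * w ^ 2 - 2 * (a * m) * w) * (r - rMinus M a)
        + (μ ^ 2 - w ^ 2) * r ^ 2 * (r - rMinus M a)
        + w ^ 2 * ((rPlus M a) ^ 2 * r + (rPlus M a) ^ 3 - 2 * M * r ^ 2)) := by
  have h1 : rPlus M a + rMinus M a = 2 * M := rsum
  have h2 := rprod hM ha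
  have hd := delta_eq hM ha r
  have hC : (r ^ 2 + a ^ 2) * w - a * m = w * (r ^ 2 - rPlus M a ^ 2) := by
    linear_combination -w * h2 + hw + (rPlus M a * w) * h1
  have e1 : Vpot M a m w lam μ r = (r ^ 2 - 2 * M * r + a ^ 2) *
      (lam + a ^ 2 * w ^ 2 - 2 * (a * m) * w + μ ^ 2 * r ^ 2)
      - w ^ 2 * (r ^ 2 - rPlus M a ^ 2) ^ 2 := by
    simp only [Vpot]; rw [hd]
    linear_combination (-((r ^ 2 + a ^ 2) * w - a * m + w * (r ^ 2 - rPlus M a ^ 2))) * hC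
  have e2 : r ^ 2 - 2 * M * r + a ^ 2 = (r - rPlus M a) * (r - rMinus M a) := by
    rw [← hd, Delta]
  rw [e1, e2]
  linear_combination (-(r - rPlus M a) * w ^ 2 * r ^ 2) * h1

lemma vpot_pos_regime2 {M a : ℝ} (hM : 0 < M) (ha : |a| < M) (m : ℤ) {w lam μ : ℝ}
    (hw : 2 * M * rPlus M a * w = a * m) (hw0 : w ≠ 0)
    (hε : 2 * M * w ^ 2 / (rPlus M a - rMinus M a)
        + max 0 (2 * (a * m) * w - a ^ 2 * w ^ 2 - lam) / rPlus M a ^ 2 ≤ μ ^ 2 - w ^ 2) :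
    ∀ r ∈ Ioi (rPlus M a), 0 < Vpot M a m w lam μ r := by
  intro r hr
  set p := rPlus M a with hp
  set q := rMinus M a with hq
  have hq0 : 0 ≤ q := rMinus_nonneg hM ha
  have hqp : q < p := rMinus_lt_rPlus hM ha
  have hp0 : 0 < p := rPlus_pos hM ha
  have hs : 0 < p - q := by linarith
  have hrp : p < r := hr
  have hr0 : 0 < r := hp0.trans hrp
  have hw2 : 0 < w ^ 2 := by positivity
  rw [vpot_factor hM ha m hw lam μ r]
  refine mul_pos (by linarith) ?_
  set K := lam + a ^ 2 * w ^ 2 - 2 * (a * m) * w with hK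
  set e2 := max 0 (2 * (a * m) * w - a ^ 2 * w ^ 2 - lam) / p ^ 2 with he2
  have he2nn : 0 ≤ e2 := by positivity
  have hmaxc : e2 * p ^ 2 = max 0 (2 * (a * m) * w - a ^ 2 * w ^ 2 - lam) :=
    div_mul_cancel₀ _ (by positivity)
  have key1 : 0 ≤ (r - q) * (K + e2 * r ^ 2) := by
    refine mul_nonneg (by linarith) ?_
    have h1 : e2 * p ^ 2 ≤ e2 * r ^ 2 :=
      mul_le_mul_of_nonneg_left (by nlinarith) he2nn
    have h2 : -K ≤ max 0 (2 * (a * m) * w - a ^ 2 * w ^ 2 - lam) :=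
      le_max_of_le_right (by rw [hK]; ring_nf; exact le_rfl)
    linarith
  have e1pos : 0 < 2 * M * w ^ 2 / (p - q) := div_pos (by positivity) hs
  have hc : 2 * M * w ^ 2 / (p - q) * (p - q) = 2 * M * w ^ 2 := div_mul_cancel₀ _ hs.ne'
  have key2 : 2 * M * w ^ 2 * r ^ 2 ≤ 2 * M * w ^ 2 / (p - q) * r ^ 2 * (r - q) := by
    have h3 : 2 * M * w ^ 2 / (p - q) * (p - q) ≤ 2 * M * w ^ 2 / (p - q) * (r - q) :=
      mul_le_mul_of_nonneg_left (by linarith) e1pos.le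
    nlinarith [sq_nonneg r]
  have hextra : 0 ≤ (μ ^ 2 - w ^ 2 - 2 * M * w ^ 2 / (p - q) - e2) * (r ^ 2 * (r - q)) :=
    mul_nonneg (by linarith) (mul_nonneg (sq_nonneg r) (by linarith))
  nlinarith [mul_pos (mul_pos hw2 (pow_pos hp0 2)) hr0, mul_pos hw2 (pow_pos hp0 3)]

lemma vpot_pos_regime1 {M a : ℝ} (hM : 0 < M) (ha : |a| < M) (m : ℤ) {w lam μ : ℝ}
    (hw : 2 * M * rPlus M a * w = a * m) (hw0 : w ≠ 0)
    (hK : 0 < lam + a ^ 2 * w ^ 2 - 2 * (a * m) * w)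
    (hε : 0 < μ ^ 2 - w ^ 2)
    (hbig : 2 * M * w ^ 2 * (rMinus M a + 2 * M * w ^ 2 / (μ ^ 2 - w ^ 2)) ^ 2
        < (lam + a ^ 2 * w ^ 2 - 2 * (a * m) * w) * (rPlus M a - rMinus M a)) :
    ∀ r ∈ Ioi (rPlus M a), 0 < Vpot M a m w lam μ r := by
  intro r hr
  set p := rPlus M a with hp
  set q := rMinus M a with hq
  have hq0 : 0 ≤ q := rMinus_nonneg hM ha
  have hqp : q < p := rMinus_lt_rPlus hM ha
  have hp0 : 0 < p := rPlus_pos hM ha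
  have hrp : p < r := hr
  have hr0 : 0 < r := hp0.trans hrp
  have hw2 : 0 < w ^ 2 := by positivity
  rw [vpot_factor hM ha m hw lam μ r]
  refine mul_pos (by linarith) ?_
  set K := lam + a ^ 2 * w ^ 2 - 2 * (a * m) * w with hKdef
  have hrq : 0 < r - q := by linarith
  rcases le_or_gt (q + 2 * M * w ^ 2 / (μ ^ 2 - w ^ 2)) r with hbr | hsr
  · have h5 : 2 * M * w ^ 2 ≤ (μ ^ 2 - w ^ 2) * (r - q) := by
      have hc : (μ ^ 2 - w ^ 2) * (2 * M * w ^ 2 / (μ ^ 2 - w ^ 2)) = 2 * M * w ^ 2 :=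
        mul_div_cancel₀ _ hε.ne'
      nlinarith [mul_le_mul_of_nonneg_left (show 2 * M * w ^ 2 / (μ ^ 2 - w ^ 2) ≤ r - q by
        linarith) hε.le]
    nlinarith [sq_nonneg r, mul_pos hK hrq,
      mul_pos (mul_pos hw2 (pow_pos hp0 2)) hr0, mul_pos hw2 (pow_pos hp0 3),
      mul_le_mul_of_nonneg_left h5 (sq_nonneg r)]
  · have h6 : r ^ 2 < (q + 2 * M * w ^ 2 / (μ ^ 2 - w ^ 2)) ^ 2 := by
      have := mul_self_lt_mul_self hr0.le hsr
      nlinarith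
    have h7 : K * (p - q) ≤ K * (r - q) := mul_le_mul_of_nonneg_left (by linarith) hK.le
    have h8 : 0 ≤ (μ ^ 2 - w ^ 2) * r ^ 2 * (r - q) := by positivity
    have h9 : 2 * M * w ^ 2 * r ^ 2
        < 2 * M * w ^ 2 * (q + 2 * M * w ^ 2 / (μ ^ 2 - w ^ 2)) ^ 2 :=
      mul_lt_mul_of_pos_left h6 (by positivity)
    nlinarith [mul_pos (mul_pos hw2 (pow_pos hp0 2)) hr0, mul_pos hw2 (pow_pos hp0 3)]

lemma noSol {M a : ℝ} (hM : 0 < M) (ha : |a| < M) (m : ℤ) {w lam μ : ℝ}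
    (hV : ∀ r ∈ Ioi (rPlus M a), 0 < Vpot M a m w lam μ r)
    (R : ℝ → ℂ) (hne : ∃ r ∈ Ioi (rPlus M a), R r ≠ 0)
    (h2 : ContDiffOn ℝ 2 R (Ioi (rPlus M a)))
    (hode : RadialODE M a m w lam μ R)
    (h1 : ContDiffOn ℝ 1 R (Ici (rPlus M a)))
    (hdec : ExpDecay (rPlus M a) R) : False := by
  set p := rPlus M a with hp
  set q := rMinus M a with hq
  have hq0 : 0 ≤ q := rMinus_nonneg hM ha
  have hqp : q < p := rMinus_lt_rPlus hM ha
  have hp0 : 0 < p := rPlus_pos hM ha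
  have hΔpos : ∀ r ∈ Ioi p, 0 < Delta M a r := fun r hr =>
    mul_pos (sub_pos.2 hr) (sub_pos.2 (hqp.trans hr))
  -- differentiability of R and deriv R on the open interval
  have hRdiff : ∀ r ∈ Ioi p, DifferentiableAt ℝ R r := fun r hr =>
    ((h2.differentiableOn (by norm_num)) r hr).differentiableAt (isOpen_Ioi.mem_nhds hr)
  have hR'diff : ∀ r ∈ Ioi p, DifferentiableAt ℝ (deriv R) r := by
    intro r hr
    have h := ((h2.deriv_of_isOpen isOpen_Ioi (show (1:WithTop ℕ∞) + 1 ≤ 2 by norm_num)).differentiableOn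
      (by norm_num))
    exact (h r hr).differentiableAt (isOpen_Ioi.mem_nhds hr)
  -- the complex-valued Delta has a derivative
  have hΔC : ∀ r : ℝ, HasDerivAt (fun s => ((Delta M a s : ℝ) : ℂ)) ((2 * r - p - q : ℝ) : ℂ) r := by
    intro r
    have h : HasDerivAt (fun s : ℝ => Delta M a s) (2 * r - p - q) r := by
      simp only [Delta]
      exact (((hasDerivAt_id r).sub_const p).mul ((hasDerivAt_id r).sub_const q)).congr_deriv
        (by simp only [id_eq]; ring)
    exact h.ofReal_comp
  set F : ℝ → ℂ := fun s => (Delta M a s : ℂ) * deriv R s with hF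
  have hFdiff : ∀ r ∈ Ioi p, DifferentiableAt ℝ F r := fun r hr =>
    ((hΔC r).differentiableAt).mul (hR'diff r hr)
  set ψ : ℝ → ℝ := fun r => Vpot M a m w lam μ r / Delta M a r * Complex.normSq (R r)
      + Delta M a r * Complex.normSq (deriv R r) with hψ
  set φ : ℝ → ℝ := fun r => ((Delta M a r : ℂ) * deriv R r * (starRingEnd ℂ) (R r)).re with hφ
  have hφd : ∀ r ∈ Ioi p, HasDerivAt φ (ψ r) r := by
    intro r hr
    have hFd : HasDerivAt F (deriv F r) r := (hFdiff r hr).hasDerivAt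
    have hΔne : (Delta M a r : ℂ) ≠ 0 := by
      exact_mod_cast (hΔpos r hr).ne'
    have hodeq : deriv F r = ((Vpot M a m w lam μ r / Delta M a r : ℝ) : ℂ) * R r := by
      have h0 := hode r hr
      rw [sub_eq_zero] at h0
      rw [Complex.ofReal_div, div_mul_eq_mul_div, eq_div_iff hΔne, hF]
      linear_combination h0
    have hRd : HasDerivAt R (deriv R r) r := (hRdiff r hr).hasDerivAt
    have hconj : HasDerivAt (fun s => (starRingEnd ℂ) (R s)) ((starRingEnd ℂ) (deriv R r)) r := by
      simpa using hRd.star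
    have hmul : HasDerivAt (fun s => F s * (starRingEnd ℂ) (R s))
        (deriv F r * (starRingEnd ℂ) (R r) + F r * (starRingEnd ℂ) (deriv R r)) r :=
      hFd.mul hconj
    have hre := Complex.reCLM.hasFDerivAt.comp_hasDerivAt r hmul
    have : HasDerivAt φ ((deriv F r * (starRingEnd ℂ) (R r)
        + F r * (starRingEnd ℂ) (deriv R r)).re) r := hre
    convert this using 1
    rw [hodeq, hF]
    simp only [Complex.add_re]
    rw [mul_assoc, mul_assoc]
    rw [Complex.re_ofReal_mul, Complex.re_ofReal_mul]
    rw [Complex.mul_conj, Complex.mul_conj]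
    simp [hψ]
  have hψnn : ∀ r ∈ Ioi p, 0 ≤ ψ r := by
    intro r hr
    have h1' := div_pos (hV r hr) (hΔpos r hr)
    have := Complex.normSq_nonneg (R r)
    have := Complex.normSq_nonneg (deriv R r)
    have := (hΔpos r hr).le
    simp only [hψ]
    positivity
  -- continuity of φ on the open interval
  have hφcont : ContinuousOn φ (Ioi p) := fun r hr =>
    ((hφd r hr).continuousAt).continuousWithinAt
  -- monotonicity of φ
  have hmono : MonotoneOn φ (Ioi p) := by
    apply monotoneOn_of_deriv_nonneg (convex_Ioi p) hφcont
    · intro x hx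
      rw [interior_Ioi] at hx
      exact ((hφd x hx).differentiableAt).differentiableWithinAt
    · intro x hx
      rw [interior_Ioi] at hx
      rw [(hφd x hx).deriv]
      exact hψnn x hx
  -- limit of φ at p from the right is 0
  have hlim_left : Tendsto φ (𝓝[>] p) (𝓝 0) := by
    set g : ℝ → ℝ := fun r => (derivWithin R (Ici p) r * (starRingEnd ℂ) (R r)).re with hg
    have hgc : ContinuousOn g (Ici p) := by
      apply Complex.continuous_re.comp_continuousOn
      exact (h1.continuousOn_derivWithin (uniqueDiffOn_Ici p) le_rfl).mul
        (Complex.continuous_conj.comp_continuousOn h1.continuousOn)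
    have hΔt : Tendsto (fun r => Delta M a r) (𝓝[>] p) (𝓝 0) := by
      have hc : Continuous (fun r => Delta M a r) := by
        simp only [Delta]; fun_prop
      have h0 : Delta M a p = 0 := by simp [Delta, ← hp]
      have h := (hc.tendsto p).mono_left (nhdsWithin_le_nhds (s := Ioi p))
      rw [h0] at h
      exact h
    have hgt : Tendsto g (𝓝[>] p) (𝓝 (g p)) :=
      ((hgc p self_mem_Ici).tendsto).mono_left (nhdsWithin_mono p Ioi_subset_Ici_self)
    have hprod : Tendsto (fun r => Delta M a r * g r) (𝓝[>] p) (𝓝 0) := by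
      simpa using hΔt.mul hgt
    apply hprod.congr'
    filter_upwards [self_mem_nhdsWithin] with r hr
    have hdw : derivWithin R (Ici p) r = deriv R r :=
      derivWithin_of_mem_nhds (Ici_mem_nhds hr)
    simp only [hg, hφ, hdw, mul_assoc, Complex.re_ofReal_mul]
  -- limit of φ at infinity is 0
  have hlim_right : Tendsto φ atTop (𝓝 0) := by
    obtain ⟨Cd, c, hCd, hc, hdecay⟩ := hdec
    have hbound : ∀ᶠ r in atTop, ‖φ r‖ ≤ Cd ^ 2 * (r ^ 2 * Real.exp (-(2 * c) * r)) := by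
      filter_upwards [eventually_ge_atTop (p + 1)] with r hr
      have hd := hdecay r hr
      have h1r : |φ r| ≤ ‖(Delta M a r : ℂ) * deriv R r * (starRingEnd ℂ) (R r)‖ :=
        Complex.abs_re_le_norm _
      have h2r : ‖(Delta M a r : ℂ) * deriv R r * (starRingEnd ℂ) (R r)‖
          = |Delta M a r| * ‖deriv R r‖ * ‖R r‖ := by
        simp [norm_mul]
      have hΔb : |Delta M a r| ≤ r ^ 2 := by
        rw [abs_of_nonneg (hΔpos r (by simp only [mem_Ioi]; linarith)).le]
        simp only [Delta, ← hp, ← hq]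
        nlinarith
      have hprod : ‖deriv R r‖ * ‖R r‖ ≤ Cd ^ 2 * Real.exp (-(2 * c) * r) := by
        have h3 : (‖R r‖ + ‖deriv R r‖) ^ 2 ≤ (Cd * Real.exp (-c * r)) ^ 2 := by
          apply pow_le_pow_left₀ (by positivity) hd
        have he : Real.exp (-c * r) ^ 2 = Real.exp (-(2 * c) * r) := by
          rw [← Real.exp_nat_mul]; ring_nf
        nlinarith [norm_nonneg (R r), norm_nonneg (deriv R r), sq_nonneg (Cd * Real.exp (-c*r))]
      calc ‖φ r‖ = |φ r| := rfl
        _ ≤ |Delta M a r| * ‖deriv R r‖ * ‖R r‖ := by rw [← h2r]; exact h1r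
        _ ≤ r ^ 2 * (Cd ^ 2 * Real.exp (-(2 * c) * r)) := by
            have := mul_le_mul hΔb hprod (by positivity) (by positivity)
            calc |Delta M a r| * ‖deriv R r‖ * ‖R r‖
                = |Delta M a r| * (‖deriv R r‖ * ‖R r‖) := by ring
              _ ≤ r ^ 2 * (Cd ^ 2 * Real.exp (-(2 * c) * r)) := by
                  apply mul_le_mul hΔb hprod (by positivity)
                  nlinarith [abs_nonneg (Delta M a r)]
        _ = Cd ^ 2 * (r ^ 2 * Real.exp (-(2 * c) * r)) := by ring
    have htail : Tendsto (fun r : ℝ => Cd ^ 2 * (r ^ 2 * Real.exp (-(2 * c) * r))) atTop (𝓝 0) := by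
      have hcore : Tendsto (fun r : ℝ => r ^ 2 * Real.exp (-(2 * c) * r)) atTop (𝓝 0) := by
        have hcomp : Tendsto (fun r : ℝ => 2 * c * r) atTop atTop :=
          Tendsto.const_mul_atTop (by positivity) tendsto_id
        have hbase := (tendsto_pow_mul_exp_neg_atTop_nhds_zero 2).comp hcomp
        have heq : (fun r : ℝ => r ^ 2 * Real.exp (-(2 * c) * r))
            = fun r : ℝ => (1 / (2 * c) ^ 2) * (((2 * c * r) ^ 2) * Real.exp (-(2 * c * r))) := by
          funext r
          field_simp
        rw [heq]
        have := hbase.const_mul (1 / (2 * c) ^ 2)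
        simp only [Function.comp_def, mul_zero] at this ⊢
        convert this using 2
      simpa using hcore.const_mul (Cd ^ 2)
    exact squeeze_zero_norm' hbound htail
  -- φ vanishes identically on the open interval
  have hφ0 : ∀ x ∈ Ioi p, φ x = 0 := by
    intro x hx
    have hge : 0 ≤ φ x := by
      apply le_of_tendsto hlim_left
      filter_upwards [Ioc_mem_nhdsGT_of_mem ⟨le_refl p, hx⟩] with y hy
      exact hmono hy.1 hx hy.2
    have hle : φ x ≤ 0 := by
      apply ge_of_tendsto hlim_right
      filter_upwards [eventually_ge_atTop x] with y hy
      exact hmono hx (lt_of_lt_of_le hx hy) hy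
    linarith
  -- contradiction at a point where R ≠ 0
  obtain ⟨r₀, hr₀, hR₀⟩ := hne
  have hψpos : 0 < ψ r₀ := by
    have h1' := div_pos (hV r₀ hr₀) (hΔpos r₀ hr₀)
    have h2' := Complex.normSq_pos.2 hR₀
    have h3' := Complex.normSq_nonneg (deriv R r₀)
    have h4' := (hΔpos r₀ hr₀).le
    simp only [hψ]
    positivity
  have hev : φ =ᶠ[𝓝 r₀] fun _ => 0 := by
    filter_upwards [isOpen_Ioi.mem_nhds hr₀] with x hx
    exact hφ0 x hx
  have hd0 : HasDerivAt (fun _ : ℝ => (0 : ℝ)) (ψ r₀) r₀ := by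
    rw [← hev.hasDerivAt_iff]
    exact hφd r₀ hr₀
  have : ψ r₀ = 0 := hd0.unique (hasDerivAt_const r₀ 0)
  linarith

set_option maxHeartbeats 1000000 in
/-- with `ω = a m / (2 M r₊)`, there is a function `C(λ) ≥ 0` tending to `0` as
`λ → ∞` such that any real mode solution with mass `μ` satisfies `μ² < ω² + C(λ)`. -/
theorem stmt3 (M a : ℝ) (hM : 0 < M) (ha : |a| < M) (m : ℤ)
    (ham : a * m ≠ 0) :
    ∃ C : ℝ → ℝ, (∀ lam : ℝ, 0 ≤ C lam) ∧ Tendsto C atTop (𝓝 0) ∧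
      ∀ lam μ : ℝ, (a * m / (2 * M * rPlus M a)) ^ 2 < μ ^ 2 →
        (∃ R : ℝ → ℂ,
          (∃ r ∈ Ioi (rPlus M a), R r ≠ 0) ∧
          ContDiffOn ℝ 2 R (Ioi (rPlus M a)) ∧
          RadialODE M a m (a * m / (2 * M * rPlus M a)) lam μ R ∧
          ContDiffOn ℝ 1 R (Ici (rPlus M a)) ∧
          ExpDecay (rPlus M a) R) →
        μ ^ 2 < (a * m / (2 * M * rPlus M a)) ^ 2 + C lam := by
  have hp0 : 0 < rPlus M a := rPlus_pos hM ha
  have hq0 : 0 ≤ rMinus M a := rMinus_nonneg hM ha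
  have hqp : rMinus M a < rPlus M a := rMinus_lt_rPlus hM ha
  set p := rPlus M a with hpdef
  set q := rMinus M a with hqdef
  set w := a * (m : ℝ) / (2 * M * p) with hwdef
  have hw : 2 * M * p * w = a * m := by
    rw [hwdef]; field_simp
  have hw0 : w ≠ 0 := by
    rw [hwdef]
    exact div_ne_zero ham (by positivity)
  have hs : 0 < p - q := by linarith
  have hw2 : 0 < w ^ 2 := by positivity
  set K0 : ℝ := 2 * (a * m) * w - a ^ 2 * w ^ 2 with hK0
  set C2 : ℝ → ℝ := fun lam => 2 * M * w ^ 2 / (p - q) + max 0 (K0 - lam) / p ^ 2 with hC2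
  set B : ℝ := 2 * M * w ^ 2 * Real.sqrt (8 * M * w ^ 2 / (p - q)) with hB
  set C1 : ℝ → ℝ := fun lam => B / Real.sqrt (lam - K0) with hC1
  set L0 : ℝ := K0 + 8 * M * w ^ 2 * q ^ 2 / (p - q) + 1 with hL0
  have hC2nn : ∀ lam, 0 ≤ C2 lam := by
    intro lam
    have h1 : (0:ℝ) ≤ 2 * M * w ^ 2 / (p - q) := le_of_lt (div_pos (by positivity) hs)
    have h2 : (0:ℝ) ≤ max 0 (K0 - lam) / p ^ 2 := div_nonneg (le_max_left _ _) (by positivity)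
    simp only [hC2]; linarith
  have hC1nn : ∀ lam, 0 ≤ C1 lam := fun lam =>
    div_nonneg (by positivity) (Real.sqrt_nonneg _)
  have hCnn : ∀ lam : ℝ, 0 ≤ if L0 ≤ lam then min (C2 lam) (C1 lam) else C2 lam := by
    intro lam
    by_cases h : L0 ≤ lam
    · rw [if_pos h]; exact le_min (hC2nn lam) (hC1nn lam)
    · rw [if_neg h]; exact hC2nn lam
  refine ⟨fun lam => if L0 ≤ lam then min (C2 lam) (C1 lam) else C2 lam, hCnn, ?_, ?_⟩
  · -- tends to zero
    apply squeeze_zero' (g := C1)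
    · exact Eventually.of_forall hCnn
    · filter_upwards [eventually_ge_atTop L0] with lam h
      simp only [if_pos h]
      exact min_le_right _ _
    · apply Filter.Tendsto.div_atTop tendsto_const_nhds
      rw [tendsto_atTop_atTop]
      intro b
      refine ⟨K0 + (max b 0) ^ 2, fun lam hlam => ?_⟩
      have h1 : (max b 0) ^ 2 ≤ lam - K0 := by linarith
      have h2 : max b 0 ≤ Real.sqrt (lam - K0) := by
        rw [show max b 0 = Real.sqrt ((max b 0) ^ 2) by
          rw [Real.sqrt_sq (le_max_right b 0)]]
        exact Real.sqrt_le_sqrt h1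
      exact le_trans (le_max_left b 0) h2
  · rintro lam μ hμ ⟨R, hne, h2, hode, h1, hdec⟩
    by_contra hcon
    push_neg at hcon
    have hε : 0 < μ ^ 2 - w ^ 2 := by
      have : w ^ 2 < μ ^ 2 := hμ
      linarith
    have hreg2 : C2 lam ≤ μ ^ 2 - w ^ 2 → ∀ r ∈ Ioi p, 0 < Vpot M a m w lam μ r := by
      intro hle
      apply vpot_pos_regime2 hM ha m hw hw0
      simp only [hC2, hK0] at hle
      have : 2 * (a * ↑m) * w - a ^ 2 * w ^ 2 - lam = (2 * (a * ↑m) * w - a ^ 2 * w ^ 2) - lam := by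
        ring
      rw [this]
      linarith
    have hV : ∀ r ∈ Ioi p, 0 < Vpot M a m w lam μ r := by
      by_cases hL : L0 ≤ lam
      · rw [if_pos hL] at hcon
        rcases min_le_iff.1 (show min (C2 lam) (C1 lam) ≤ μ ^ 2 - w ^ 2 by linarith)
          with hc2 | hc1
        · exact hreg2 hc2
        · -- regime 1
          have hKpos : 0 < lam - K0 := by
            have hnn : 0 ≤ 8 * M * w ^ 2 * q ^ 2 / (p - q) := by positivity
            simp only [hL0] at hL; linarith
          have hK : 0 < lam + a ^ 2 * w ^ 2 - 2 * (a * m) * w := by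
            simp only [hK0] at hKpos; linarith
          set t := Real.sqrt ((lam - K0) * (p - q) / (8 * M * w ^ 2)) with ht
          have ht2 : t ^ 2 = (lam - K0) * (p - q) / (8 * M * w ^ 2) :=
            Real.sq_sqrt (by positivity)
          have htq : q < t := by
            have hKlow : 8 * M * w ^ 2 * q ^ 2 / (p - q) + 1 ≤ lam - K0 := by
              simp only [hL0] at hL; linarith
            have hcan : 8 * M * w ^ 2 * q ^ 2 / (p - q) * (p - q) = 8 * M * w ^ 2 * q ^ 2 :=
              div_mul_cancel₀ _ hs.ne'
            have hq2 : q ^ 2 < t ^ 2 := by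
              rw [ht2, lt_div_iff₀ (by positivity)]
              nlinarith [mul_le_mul_of_nonneg_right hKlow hs.le]
            exact lt_of_pow_lt_pow_left₀ 2 (Real.sqrt_nonneg _) hq2
          have hBt : B * t = 2 * M * w ^ 2 * Real.sqrt (lam - K0) := by
            rw [hB, ht, mul_assoc, ← Real.sqrt_mul (by positivity)]
            congr 1
            field_simp
          have hsqpos : 0 < Real.sqrt (lam - K0) := Real.sqrt_pos.2 hKpos
          have hc1' : B ≤ (μ ^ 2 - w ^ 2) * Real.sqrt (lam - K0) := by
            rw [hC1] at hc1
            calc B = B / Real.sqrt (lam - K0) * Real.sqrt (lam - K0) :=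
                (div_mul_cancel₀ _ hsqpos.ne').symm
              _ ≤ (μ ^ 2 - w ^ 2) * Real.sqrt (lam - K0) :=
                mul_le_mul_of_nonneg_right hc1 hsqpos.le
          have htpos : 0 < t := lt_of_le_of_lt hq0 htq
          have hεt : 2 * M * w ^ 2 ≤ (μ ^ 2 - w ^ 2) * t := by
            have step : B * t ≤ (μ ^ 2 - w ^ 2) * Real.sqrt (lam - K0) * t :=
              mul_le_mul_of_nonneg_right hc1' htpos.le
            rw [hBt] at step
            have step' : 2 * M * w ^ 2 * Real.sqrt (lam - K0)
                ≤ (μ ^ 2 - w ^ 2) * t * Real.sqrt (lam - K0) := by nlinarith [step]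
            exact le_of_mul_le_mul_right step' hsqpos
          have h2e : 2 * M * w ^ 2 / (μ ^ 2 - w ^ 2) ≤ t :=
            (div_le_iff₀ hε).2 (by linarith)
          have hbig : 2 * M * w ^ 2 * (q + 2 * M * w ^ 2 / (μ ^ 2 - w ^ 2)) ^ 2
              < (lam + a ^ 2 * w ^ 2 - 2 * (a * m) * w) * (p - q) := by
            have h8 : 8 * M * w ^ 2 * t ^ 2 = (lam - K0) * (p - q) := by
              rw [ht2, mul_comm, div_mul_cancel₀ _ (by positivity : (8 * M * w ^ 2 : ℝ) ≠ 0)]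
            have hqe : 0 ≤ q + 2 * M * w ^ 2 / (μ ^ 2 - w ^ 2) := by positivity
            have hKeq : lam + a ^ 2 * w ^ 2 - 2 * (a * m) * w = lam - K0 := by
              simp only [hK0]; ring
            rw [hKeq]
            have hlt : q + 2 * M * w ^ 2 / (μ ^ 2 - w ^ 2) < 2 * t := by linarith
            have hsq : (q + 2 * M * w ^ 2 / (μ ^ 2 - w ^ 2)) ^ 2 < (2 * t) ^ 2 := by
              nlinarith [mul_self_lt_mul_self hqe hlt]
            have hmul := mul_lt_mul_of_pos_left hsq (show (0:ℝ) < 2 * M * w ^ 2 by positivity)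
            nlinarith [hmul, h8]
          exact vpot_pos_regime1 hM ha m hw hw0 hK hε hbig
      · rw [if_neg hL] at hcon
        exact hreg2 (by linarith)
    exact noSol hM ha m hV R hne h2 hode h1 hdec
end

section
/- Let ω, λ, μ ∈ ℝ with a·m − 2·M·r₊·ω = 0 and μ > 0, and let c > 0 be real. Suppose R : (r₊, ∞) → ℂ is a C² solution of the radial ODE which extends to a C¹ function on [r₊, ∞) and decays exponentially at infinity, and suppose there exists a C² function g : (r₊, ∞) → ℂ, extending to a C¹ function on [r₊, ∞) and decaying exponentially at infinity, with (Δ·g')' − (V/Δ)·g = (2·μ·r² + c)·R on (r₊, ∞). Then R is identically zero. -/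
open Real Set MeasureTheory Filter Topology ComplexConjugate

/-- if `R` is a decaying solution of the radial ODE (at the superradiance
threshold, with `μ > 0`) and the inhomogeneous equation `(Δ g')' − (V/Δ) g = (2 μ r² + c) R`
has a decaying solution `g`, then `R ≡ 0`. -/
theorem stmt14 (M a : ℝ) (hM : 0 < M) (ha : |a| < M) (m : ℤ)
    (ω lam μ c : ℝ) (hsup : a * m - 2 * M * rPlus M a * ω = 0)
    (hμ : 0 < μ) (hc : 0 < c)
    (R : ℝ → ℂ)
    (hRC2 : ContDiffOn ℝ 2 R (Ioi (rPlus M a)))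
    (hODE : RadialODE M a m ω lam μ R)
    (hRC1 : ContDiffOn ℝ 1 R (Ici (rPlus M a)))
    (hRdec : ExpDecay (rPlus M a) R)
    (g : ℝ → ℂ)
    (hgC2 : ContDiffOn ℝ 2 g (Ioi (rPlus M a)))
    (hgC1 : ContDiffOn ℝ 1 g (Ici (rPlus M a)))
    (hgdec : ExpDecay (rPlus M a) g)
    (hgODE : ∀ r ∈ Ioi (rPlus M a),
      deriv (fun s => (Delta M a s : ℂ) * deriv g s) r
        - ((Vpot M a m ω lam μ r / Delta M a r : ℝ) : ℂ) * g r
        = ((2 * μ * r ^ 2 + c : ℝ) : ℂ) * R r) :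
    ∀ r ∈ Ioi (rPlus M a), R r = 0 := by
  have haM : a ^ 2 < M ^ 2 := by nlinarith [abs_nonneg a, sq_abs a, le_abs_self a, neg_abs_le a]
  have hs : 0 < Real.sqrt (M ^ 2 - a ^ 2) := Real.sqrt_pos.2 (by linarith)
  have hsle : Real.sqrt (M ^ 2 - a ^ 2) ≤ M := by
    have h := Real.sqrt_le_sqrt (show M ^ 2 - a ^ 2 ≤ M ^ 2 by nlinarith [sq_nonneg a])
    rwa [Real.sqrt_sq hM.le] at h
  have hrm_nonneg : 0 ≤ rMinus M a := by simp only [rMinus]; linarith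
  have hrp_pos : 0 < rPlus M a := by simp only [rPlus]; linarith
  have hDpos : ∀ r ∈ Ioi (rPlus M a), 0 < Delta M a r := by
    intro r hr
    simp only [mem_Ioi] at hr
    have h1 : rMinus M a < rPlus M a := by simp only [rMinus, rPlus]; linarith
    exact mul_pos (by linarith) (by linarith)
  -- differentiability of the (complexified) Delta
  have hor : Differentiable ℝ (fun r : ℝ => (r : ℂ)) := Complex.ofRealCLM.differentiable
  have hDdiff : Differentiable ℝ (fun s : ℝ => ((Delta M a s : ℝ) : ℂ)) := by
    have heq : (fun s : ℝ => ((Delta M a s : ℝ) : ℂ))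
        = fun s : ℝ => ((s : ℂ) - (rPlus M a : ℝ)) * ((s : ℂ) - (rMinus M a : ℝ)) := by
      funext s; simp only [Delta]; push_cast; ring
    rw [heq]
    exact (hor.sub_const _).mul (hor.sub_const _)
  -- interior regularity
  have hgd1 : ∀ r ∈ Ioi (rPlus M a), DifferentiableAt ℝ g r := fun r hr =>
    ((hgC2.differentiableOn (by norm_num)) r hr).differentiableAt (isOpen_Ioi.mem_nhds hr)
  have hRd1 : ∀ r ∈ Ioi (rPlus M a), DifferentiableAt ℝ R r := fun r hr =>
    ((hRC2.differentiableOn (by norm_num)) r hr).differentiableAt (isOpen_Ioi.mem_nhds hr)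
  have hgd2 : ∀ r ∈ Ioi (rPlus M a), DifferentiableAt ℝ (deriv g) r := fun r hr =>
    (((hgC2.deriv_of_isOpen (m := 1) isOpen_Ioi (by norm_num)).differentiableOn
      one_ne_zero) r hr).differentiableAt (isOpen_Ioi.mem_nhds hr)
  have hRd2 : ∀ r ∈ Ioi (rPlus M a), DifferentiableAt ℝ (deriv R) r := fun r hr =>
    (((hRC2.deriv_of_isOpen (m := 1) isOpen_Ioi (by norm_num)).differentiableOn
      one_ne_zero) r hr).differentiableAt (isOpen_Ioi.mem_nhds hr)
  -- the Wronskian-type quantity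
  set W : ℝ → ℂ := fun s => (Delta M a s : ℂ) * deriv g s * conj (R s)
      - conj ((Delta M a s : ℂ) * deriv R s) * g s with hWdef
  have hWkey : ∀ r ∈ Ioi (rPlus M a),
      HasDerivAt W (((2 * μ * r ^ 2 + c) * Complex.normSq (R r) : ℝ) : ℂ) r := by
    intro r hr
    have hne : (Delta M a r : ℂ) ≠ 0 := by
      exact_mod_cast (hDpos r hr).ne'
    have hPgd : DifferentiableAt ℝ (fun s => (Delta M a s : ℂ) * deriv g s) r :=
      (hDdiff r).mul (hgd2 r hr)
    have hPRd : DifferentiableAt ℝ (fun s => (Delta M a s : ℂ) * deriv R s) r :=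
      (hDdiff r).mul (hRd2 r hr)
    have eg : deriv (fun s => (Delta M a s : ℂ) * deriv g s) r
        = ((Vpot M a m ω lam μ r / Delta M a r : ℝ) : ℂ) * g r
          + ((2 * μ * r ^ 2 + c : ℝ) : ℂ) * R r := by
      have h0 := hgODE r hr
      linear_combination h0
    have eR : deriv (fun s => (Delta M a s : ℂ) * deriv R s) r
        = ((Vpot M a m ω lam μ r / Delta M a r : ℝ) : ℂ) * R r := by
      have h0 := hODE r hr
      rw [Complex.ofReal_div, div_mul_eq_mul_div, eq_div_iff hne]
      linear_combination h0
    have hcR : HasDerivAt (fun s => conj (R s)) (conj (deriv R r)) r := by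
      simpa [Complex.star_def] using ((hRd1 r hr).hasDerivAt).star
    have hcPR : HasDerivAt (fun s => conj ((Delta M a s : ℂ) * deriv R s))
        (conj (deriv (fun s => (Delta M a s : ℂ) * deriv R s) r)) r := by
      simpa [Complex.star_def] using (hPRd.hasDerivAt).star
    have hWd := ((hPgd.hasDerivAt.mul hcR).sub (hcPR.mul (hgd1 r hr).hasDerivAt))
    refine hWd.congr_deriv ?_
    symm
    rw [eg, eR]
    simp only [map_mul, Complex.conj_ofReal]
    have hm : R r * conj (R r) = (Complex.normSq (R r) : ℂ) := Complex.mul_conj _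
    push_cast
    linear_combination (-(2 * (μ : ℂ) * (r : ℂ) ^ 2 + (c : ℂ))) * hm
  -- the real part
  set F : ℝ → ℝ := fun s => (W s).re with hFdef
  have hFd : ∀ r ∈ Ioi (rPlus M a),
      HasDerivAt F ((2 * μ * r ^ 2 + c) * Complex.normSq (R r)) r := by
    intro r hr
    have h := Complex.reCLM.hasFDerivAt.comp_hasDerivAt r (hWkey r hr)
    exact h
  have hFmono : MonotoneOn F (Ioi (rPlus M a)) := by
    apply monotoneOn_of_deriv_nonneg (convex_Ioi _)
    · intro x hx; exact ((hFd x hx).continuousAt).continuousWithinAt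
    · intro x hx; rw [interior_Ioi] at hx
      exact (hFd x hx).differentiableAt.differentiableWithinAt
    · intro x hx; rw [interior_Ioi] at hx
      rw [(hFd x hx).deriv]
      have hx2 : (0:ℝ) < 2 * μ * x ^ 2 + c := by
        have : (0:ℝ) ≤ x ^ 2 := sq_nonneg x
        nlinarith
      exact mul_nonneg hx2.le (Complex.normSq_nonneg _)
  -- limit of W at r₊ from the right
  have hD0 : Tendsto (fun s : ℝ => ((Delta M a s : ℝ) : ℂ)) (𝓝[>] (rPlus M a)) (𝓝 0) := by
    have h2 : Tendsto (fun s : ℝ => ((Delta M a s : ℝ) : ℂ)) (𝓝[>] (rPlus M a))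
        (𝓝 ((Delta M a (rPlus M a) : ℝ) : ℂ)) :=
      (hDdiff.continuous.tendsto (rPlus M a)).mono_left nhdsWithin_le_nhds
    simpa [Delta] using h2
  have hglim : Tendsto g (𝓝[>] (rPlus M a)) (𝓝 (g (rPlus M a))) :=
    ((hgC1.continuousOn _ self_mem_Ici).tendsto).mono_left
      (nhdsWithin_mono _ Ioi_subset_Ici_self)
  have hRlim : Tendsto R (𝓝[>] (rPlus M a)) (𝓝 (R (rPlus M a))) :=
    ((hRC1.continuousOn _ self_mem_Ici).tendsto).mono_left
      (nhdsWithin_mono _ Ioi_subset_Ici_self)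
  have hderiv_eq : ∀ h : ℝ → ℂ, ∀ s ∈ Ioi (rPlus M a),
      derivWithin h (Ici (rPlus M a)) s = deriv h s := by
    intro h s hs
    exact derivWithin_of_mem_nhds (mem_of_superset (isOpen_Ioi.mem_nhds hs) Ioi_subset_Ici_self)
  have hlim' : ∀ h : ℝ → ℂ, ContDiffOn ℝ 1 h (Ici (rPlus M a)) →
      Tendsto (deriv h) (𝓝[>] (rPlus M a))
        (𝓝 (derivWithin h (Ici (rPlus M a)) (rPlus M a))) := by
    intro h hC1
    have h1 := (hC1.continuousOn_derivWithin (uniqueDiffOn_Ici _) (le_refl 1))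
      _ (self_mem_Ici (a := rPlus M a))
    have h2 := (h1.tendsto).mono_left (nhdsWithin_mono _ Ioi_subset_Ici_self)
    refine Filter.Tendsto.congr' ?_ h2
    filter_upwards [eventually_mem_nhdsWithin] with s hs using hderiv_eq h s hs
  have hg'lim := hlim' g hgC1
  have hR'lim := hlim' R hRC1
  have hWrp : Tendsto W (𝓝[>] (rPlus M a)) (𝓝 0) := by
    have key := (((hD0.mul hg'lim).mul (hRlim.star)).sub (((hD0.mul hR'lim).star).mul hglim))
    simpa [hWdef, Complex.star_def, map_mul, Complex.conj_ofReal] using key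
  have hFrp : Tendsto F (𝓝[>] (rPlus M a)) (𝓝 0) := by
    have := (Complex.continuous_re.tendsto 0).comp hWrp
    exact this
  -- limit of W at infinity
  obtain ⟨C1, c1, hC1, hc1, hR1b⟩ := hRdec
  obtain ⟨C2, c2, hC2, hc2, hg2b⟩ := hgdec
  have hWtop : Tendsto W atTop (𝓝 0) := by
    apply squeeze_zero_norm'
      (a := fun r => (2 * C1 * C2) * (r ^ (2:ℝ) * Real.exp (-(c1 + c2) * r)))
    · filter_upwards [eventually_ge_atTop (rPlus M a + 1), eventually_ge_atTop (0:ℝ)]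
        with r h1 h0
      have hRr : ‖R r‖ ≤ C1 * Real.exp (-c1 * r) :=
        le_trans (le_add_of_nonneg_right (norm_nonneg _)) (hR1b r h1)
      have hR'r : ‖deriv R r‖ ≤ C1 * Real.exp (-c1 * r) :=
        le_trans (le_add_of_nonneg_left (norm_nonneg _)) (hR1b r h1)
      have hgr : ‖g r‖ ≤ C2 * Real.exp (-c2 * r) :=
        le_trans (le_add_of_nonneg_right (norm_nonneg _)) (hg2b r h1)
      have hg'r : ‖deriv g r‖ ≤ C2 * Real.exp (-c2 * r) :=
        le_trans (le_add_of_nonneg_left (norm_nonneg _)) (hg2b r h1)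
      have hΔ : |Delta M a r| ≤ r ^ 2 := by
        have h3 : rPlus M a < r := by linarith
        rw [abs_of_nonneg (hDpos r h3).le]
        simp only [Delta]
        nlinarith
      have hnorm : ‖W r‖ ≤ |Delta M a r| * ‖deriv g r‖ * ‖R r‖
          + |Delta M a r| * ‖deriv R r‖ * ‖g r‖ := by
        refine le_trans (norm_sub_le _ _) ?_
        simp only [norm_mul, Complex.norm_real, RCLike.norm_conj, Real.norm_eq_abs]
        exact le_refl _
      calc ‖W r‖ ≤ |Delta M a r| * ‖deriv g r‖ * ‖R r‖
          + |Delta M a r| * ‖deriv R r‖ * ‖g r‖ := hnorm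
        _ ≤ r ^ 2 * (C2 * Real.exp (-c2 * r)) * (C1 * Real.exp (-c1 * r))
          + r ^ 2 * (C1 * Real.exp (-c1 * r)) * (C2 * Real.exp (-c2 * r)) := by
            gcongr <;> first | exact abs_nonneg _ | exact norm_nonneg _ |
              positivity
        _ = (2 * C1 * C2) * (r ^ (2:ℝ) * Real.exp (-(c1 + c2) * r)) := by
            have h2 : r ^ (2:ℝ) = r ^ 2 := by
              rw [show (2:ℝ) = ((2:ℕ):ℝ) by norm_num, Real.rpow_natCast]
            rw [h2, show -(c1 + c2) * r = -c1 * r + -c2 * r by ring, Real.exp_add]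
            ring
    · have := (tendsto_rpow_mul_exp_neg_mul_atTop_nhds_zero 2 (c1 + c2)
        (by linarith)).const_mul (2 * C1 * C2)
      simpa using this
  have hFtop : Tendsto F atTop (𝓝 0) := by
    have := (Complex.continuous_re.tendsto 0).comp hWtop
    exact this
  -- F vanishes identically
  have hF0 : ∀ r ∈ Ioi (rPlus M a), F r = 0 := by
    intro r hr
    have h1 : 0 ≤ F r := by
      refine le_of_tendsto hFrp ?_
      filter_upwards [Ioo_mem_nhdsGT_of_mem (left_mem_Ico.2 hr)] with s hs
      exact hFmono hs.1 hr hs.2.le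
    have h2 : F r ≤ 0 := by
      refine ge_of_tendsto hFtop ?_
      filter_upwards [eventually_ge_atTop (max r (rPlus M a + 1))] with t ht
      have hrt : r ≤ t := le_trans (le_max_left _ _) ht
      exact hFmono hr (lt_of_lt_of_le hr hrt) hrt
    linarith
  -- conclude
  intro r hr
  have hloc : F =ᶠ[𝓝 r] fun _ => (0:ℝ) := by
    filter_upwards [isOpen_Ioi.mem_nhds hr] with s hs using hF0 s hs
  have h0 : HasDerivAt F 0 r := (hasDerivAt_const r (0:ℝ)).congr_of_eventuallyEq hloc
  have heq := h0.unique (hFd r hr)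
  have hpos : (0:ℝ) < 2 * μ * r ^ 2 + c := by
    have : (0:ℝ) ≤ r ^ 2 := sq_nonneg r
    nlinarith
  have hnsq : Complex.normSq (R r) = 0 :=
    (mul_eq_zero.mp heq.symm).resolve_left hpos.ne'
  exact Complex.normSq_eq_zero.mp hnsq
end
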